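/- arXiv:0906.0821 — 2 statements merged into one kernel-verified Lean document; each statement's English description precedes it below -/
import Mathlib

section
/- Let κ, K ∈ ℝ with κ² + K ≤ 0 and K ≠ 0. If (ξ_T, ξ_N, a):ℝ→ℝ³ solves ξ_T′ = κ ξ_N, ξ_N′ = −κ ξ_T − a, a′ = K ξ_N and is periodic with some period L > 0, then (ξ_T, ξ_N, a) is a constant multiple of (1, 0, −κ). -/
lemma constODE {f : ℝ → ℝ} (hf : ∀ t, HasDerivAt f 0 t) (t : ℝ) : f t = f 0 :=
  is_const_of_deriv_eq_zero (fun x => (hf x).differentiableAt)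
    (fun x => (hf x).deriv) t 0

lemma expODE (s : ℝ) (k : ℝ → ℝ) (hk : ∀ t, HasDerivAt k (s * k t) t) (t : ℝ) :
    k t = k 0 * Real.exp (s * t) := by
  have key : ∀ x : ℝ, HasDerivAt (fun u => k u * Real.exp (-s * u)) 0 x := by
    intro x
    have he : HasDerivAt (fun u : ℝ => Real.exp (-s * u)) (-s * Real.exp (-s * x)) x := by
      have := ((hasDerivAt_id x).const_mul (-s)).exp
      simpa [mul_comm] using this
    have := (hk x).mul he
    refine this.congr_deriv ?_
    ring
  have hc := constODE key t
  simp only [neg_mul, mul_zero, neg_zero, Real.exp_zero, mul_one] at hc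
  have hne : Real.exp (-(s * t)) ≠ 0 := Real.exp_ne_zero _
  have : k t = k 0 * (Real.exp (-(s * t)))⁻¹ := by
    field_simp at hc ⊢; linarith [hc]
  rw [this, ← Real.exp_neg, neg_neg]

/-- when `κ² + K ≤ 0` and `K ≠ 0`, every periodic solution of the
Killing transport system `ξ_T′ = κ ξ_N`, `ξ_N′ = −κ ξ_T − a`, `a′ = K ξ_N`
is a constant multiple of `(1, 0, −κ)`. -/
theorem killing_transport_periodic_trivial (κ K : ℝ)
    (hK : κ ^ 2 + K ≤ 0) (hK0 : K ≠ 0)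
    (ξT ξN a : ℝ → ℝ)
    (hT : ∀ t, HasDerivAt ξT (κ * ξN t) t)
    (hN : ∀ t, HasDerivAt ξN (-κ * ξT t - a t) t)
    (ha : ∀ t, HasDerivAt a (K * ξN t) t)
    (L : ℝ) (hL : 0 < L)
    (hper : ∀ t, ξT (t + L) = ξT t ∧ ξN (t + L) = ξN t ∧ a (t + L) = a t) :
    ∃ c : ℝ, ∀ t, ξT t = c * 1 ∧ ξN t = c * 0 ∧ a t = c * (-κ) := by
  have hN' : ∀ t, HasDerivAt (fun u => -κ * ξT u - a u)
      ((-(κ ^ 2) - K) * ξN t) t := by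
    intro t
    have := ((hT t).const_mul (-κ)).sub (ha t)
    refine this.congr_deriv ?_
    ring
  have main : ∀ t, ξN t = 0 ∧ -κ * ξT t - a t = 0 := by
    rcases lt_or_eq_of_le hK with hlt | heq
    · -- κ² + K < 0
      set s := Real.sqrt (-(κ ^ 2 + K)) with hs
      have hspos : 0 < s := Real.sqrt_pos.2 (by linarith)
      have hs2 : s ^ 2 = -(κ ^ 2 + K) := Real.sq_sqrt (by linarith)
      set k := fun u => (-κ * ξT u - a u) + s * ξN u with hk
      set h := fun u => (-κ * ξT u - a u) - s * ξN u with hh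
      have hkd : ∀ t, HasDerivAt k (s * k t) t := by
        intro t
        have := (hN' t).add ((hN t).const_mul s)
        refine this.congr_deriv ?_
        simp only [hk]
        linear_combination (-ξN t) * hs2
      have hhd : ∀ t, HasDerivAt h (-s * h t) t := by
        intro t
        have := (hN' t).sub ((hN t).const_mul s)
        refine this.congr_deriv ?_
        simp only [hh]
        linear_combination (-ξN t) * hs2
      have hksol := expODE s k hkd
      have hhsol := expODE (-s) h hhd
      have hk0 : k 0 = 0 := by
        have hp : k (0 + L) = k 0 := by
          simp only [hk]
          rw [(hper 0).1, (hper 0).2.1, (hper 0).2.2]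
        rw [hksol (0 + L)] at hp
        have hgt : 1 < Real.exp (s * (0 + L)) := by
          have : Real.exp 0 < Real.exp (s * (0 + L)) := Real.exp_lt_exp.2 (by positivity)
          simpa using this
        nlinarith [hp, hgt]
      have hh0 : h 0 = 0 := by
        have hp : h (0 + L) = h 0 := by
          simp only [hh]
          rw [(hper 0).1, (hper 0).2.1, (hper 0).2.2]
        rw [hhsol (0 + L)] at hp
        have hgt : Real.exp (-s * (0 + L)) < 1 := by
          rw [Real.exp_lt_one_iff]
          nlinarith
        nlinarith [hp, hgt]
      intro t
      have hkt : k t = 0 := by rw [hksol t, hk0, zero_mul]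
      have hht : h t = 0 := by rw [hhsol t, hh0, zero_mul]
      simp only [hk, hh] at hkt hht
      constructor
      · nlinarith [hkt, hht, hspos]
      · linarith [hkt, hht]
    · -- κ² + K = 0, so K = -κ² and κ ≠ 0
      have hKval : K = -(κ ^ 2) := by linarith
      have hκ : κ ≠ 0 := by
        intro h0
        apply hK0
        rw [hKval, h0]; ring
      -- ξN' is constant
      have hgconst : ∀ t, -κ * ξT t - a t = -κ * ξT 0 - a 0 := by
        intro t
        have := constODE (f := fun u => -κ * ξT u - a u) (fun x => by
          have := hN' x
          rwa [hKval, show -(κ ^ 2) - -(κ ^ 2) = 0 by ring, zero_mul] at this) t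
        exact this
      set c1 := -κ * ξT 0 - a 0 with hc1
      -- ξN t = ξN 0 + c1 * t
      have hNlin : ∀ t, ξN t = ξN 0 + c1 * t := by
        intro t
        have hd : ∀ x, HasDerivAt (fun u => ξN u - c1 * u) 0 x := fun x => by
          have := (hN x).sub ((hasDerivAt_id x).const_mul c1)
          rw [hgconst x] at this
          exact this.congr_deriv (by simp)
        have := constODE hd t
        simp at this
        linarith
      have hc10 : c1 = 0 := by
        have := (hper 0).2.1
        rw [hNlin (0 + L), hNlin 0] at this
        have : c1 * L = 0 := by linarith
        rcases mul_eq_zero.1 this with h | h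
        · exact h
        · exact absurd h (ne_of_gt hL)
      -- ξN constant; ξT has constant derivative κ * ξN 0
      have hNconst : ∀ t, ξN t = ξN 0 := fun t => by rw [hNlin t, hc10]; ring
      have hTlin : ∀ t, ξT t = ξT 0 + (κ * ξN 0) * t := by
        intro t
        have hd : ∀ x, HasDerivAt (fun u => ξT u - (κ * ξN 0) * u) 0 x := fun x => by
          have := (hT x).sub ((hasDerivAt_id x).const_mul (κ * ξN 0))
          rw [hNconst x] at this
          exact this.congr_deriv (by simp)
        have := constODE hd t
        simp at this
        linarith
      have hN00 : ξN 0 = 0 := by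
        have := (hper 0).1
        rw [hTlin (0 + L), hTlin 0] at this
        have h2 : (κ * ξN 0) * L = 0 := by linarith
        rcases mul_eq_zero.1 h2 with h | h
        · rcases mul_eq_zero.1 h with h' | h'
          · exact absurd h' hκ
          · exact h'
        · exact absurd h (ne_of_gt hL)
      intro t
      refine ⟨by rw [hNconst t, hN00], ?_⟩
      rw [hgconst t]
      have := hgconst
      have h2 : c1 = 0 := hc10
      linarith [hc10]
  -- conclude: ξT constant, a = -κ ξT
  have hTconst : ∀ t, ξT t = ξT 0 := by
    intro t
    exact constODE (f := ξT) (fun x => by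
      have := hT x
      rw [(main x).1, mul_zero] at this
      exact this) t
  refine ⟨ξT 0, fun t => ⟨by rw [hTconst t, mul_one], by rw [(main t).1, mul_zero], ?_⟩⟩
  have := (main t).2
  rw [hTconst t] at this
  linarith
end

section
/- Consider the 3×3 matrices Q(a,b,c) = [[0,−c,b],[c,0,−a],[−kb,ka,0]] for real parameters a,b,c and two distinct real values k (i.e., allow k to take two different values k₁ ≠ k₂ in different matrices). The Lie algebra generated (under matrix commutator) by all such matrices is all of sl(3,ℝ). -/
attribute [local instance 100] LieRing.ofAssociativeRing

/-- The coefficient matrix of the 2-dimensional Killing transport system with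
frame data `a, b, c` (for `ω¹(γ′), ω²(γ′), ω¹₂(γ′)`) and Gaussian curvature `k`. -/
def Qmat (a b c k : ℝ) : Matrix (Fin 3) (Fin 3) ℝ :=
  !![0, -c, b;
     c, 0, -a;
     -k * b, k * a, 0]

private abbrev Emat (i j : Fin 3) : Matrix (Fin 3) (Fin 3) ℝ := Matrix.single i j 1

private lemma lie_E1 : ⁅Emat 0 2, Emat 2 1⁆ = Emat 0 1 := by
  ext i j
  fin_cases i <;> fin_cases j <;>
    simp [Matrix.single, Ring.lie_def, Matrix.mul_apply, Fin.sum_univ_three]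

private lemma lie_E2 : ⁅Emat 0 2, Emat 2 0⁆ = Emat 0 0 - Emat 2 2 := by
  ext i j
  fin_cases i <;> fin_cases j <;>
    simp [Matrix.single, Ring.lie_def, Matrix.mul_apply, Fin.sum_univ_three]

private lemma lie_E3 : ⁅Emat 1 2, Emat 2 1⁆ = Emat 1 1 - Emat 2 2 := by
  ext i j
  fin_cases i <;> fin_cases j <;>
    simp [Matrix.single, Ring.lie_def, Matrix.mul_apply, Fin.sum_univ_three]

/-- if two distinct curvature values `k₁ ≠ k₂` occur, the Lie algebra
generated by all the matrices `Qmat a b c kᵢ` is all of `sl(3, ℝ)`. -/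
theorem lie_span_Qmat_eq_sl (k₁ k₂ : ℝ) (hk : k₁ ≠ k₂) :
    LieSubalgebra.lieSpan ℝ (Matrix (Fin 3) (Fin 3) ℝ)
      {Q | ∃ a b c : ℝ, Q = Qmat a b c k₁ ∨ Q = Qmat a b c k₂} =
    LieAlgebra.SpecialLinear.sl (Fin 3) ℝ := by
  set S : Set (Matrix (Fin 3) (Fin 3) ℝ) :=
    {Q | ∃ a b c : ℝ, Q = Qmat a b c k₁ ∨ Q = Qmat a b c k₂} with hS
  set L := LieSubalgebra.lieSpan ℝ (Matrix (Fin 3) (Fin 3) ℝ) S with hL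
  have hd : k₂ - k₁ ≠ 0 := sub_ne_zero.mpr (Ne.symm hk)
  have hQ1 : ∀ a b c, Qmat a b c k₁ ∈ L := fun a b c =>
    LieSubalgebra.subset_lieSpan ⟨a, b, c, Or.inl rfl⟩
  have hQ2 : ∀ a b c, Qmat a b c k₂ ∈ L := fun a b c =>
    LieSubalgebra.subset_lieSpan ⟨a, b, c, Or.inr rfl⟩
  -- E 2 0
  have hE20 : Emat 2 0 ∈ L := by
    have heq : Emat 2 0 = (k₂ - k₁)⁻¹ • (Qmat 0 1 0 k₁ - Qmat 0 1 0 k₂) := by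
      ext i j
      fin_cases i <;> fin_cases j <;>
        · simp [Matrix.single, Qmat, Matrix.vecHead, Matrix.vecTail]
          try field_simp
          try ring
    rw [heq]
    exact L.smul_mem _ (sub_mem (hQ1 0 1 0) (hQ2 0 1 0))
  -- E 2 1
  have hE21 : Emat 2 1 ∈ L := by
    have heq : Emat 2 1 = (k₂ - k₁)⁻¹ • (Qmat 1 0 0 k₂ - Qmat 1 0 0 k₁) := by
      ext i j
      fin_cases i <;> fin_cases j <;>
        · simp [Matrix.single, Qmat, Matrix.vecHead, Matrix.vecTail]
          try field_simp
          try ring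
    rw [heq]
    exact L.smul_mem _ (sub_mem (hQ2 1 0 0) (hQ1 1 0 0))
  -- E 1 2 = k₁ • E 2 1 - Qmat 1 0 0 k₁
  have hE12 : Emat 1 2 ∈ L := by
    have heq : Emat 1 2 = k₁ • Emat 2 1 - Qmat 1 0 0 k₁ := by
      ext i j
      fin_cases i <;> fin_cases j <;>
        simp [Matrix.single, Qmat, Matrix.vecHead, Matrix.vecTail]
    rw [heq]
    exact sub_mem (L.smul_mem _ hE21) (hQ1 1 0 0)
  -- E 0 2 = Qmat 0 1 0 k₁ + k₁ • E 2 0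
  have hE02 : Emat 0 2 ∈ L := by
    have heq : Emat 0 2 = Qmat 0 1 0 k₁ + k₁ • Emat 2 0 := by
      ext i j
      fin_cases i <;> fin_cases j <;>
        simp [Matrix.single, Qmat, Matrix.vecHead, Matrix.vecTail]
    rw [heq]
    exact add_mem (hQ1 0 1 0) (L.smul_mem _ hE20)
  -- E 0 1 = ⁅E 0 2, E 2 1⁆
  have hE01 : Emat 0 1 ∈ L := lie_E1 ▸ L.lie_mem hE02 hE21
  -- E 1 0 = Qmat 0 0 1 k₁ + E 0 1
  have hE10 : Emat 1 0 ∈ L := by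
    have heq : Emat 1 0 = Qmat 0 0 1 k₁ + Emat 0 1 := by
      ext i j
      fin_cases i <;> fin_cases j <;>
        simp [Matrix.single, Qmat, Matrix.vecHead, Matrix.vecTail]
    rw [heq]
    exact add_mem (hQ1 0 0 1) hE01
  have hD1 : Emat 0 0 - Emat 2 2 ∈ L := lie_E2 ▸ L.lie_mem hE02 hE20
  have hD2 : Emat 1 1 - Emat 2 2 ∈ L := lie_E3 ▸ L.lie_mem hE12 hE21
  apply le_antisymm
  · rw [hL]
    apply LieSubalgebra.lieSpan_le.mpr
    rintro Q ⟨a, b, c, h | h⟩ <;> subst h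
    · show Matrix.trace (Qmat a b c k₁) = 0
      simp [Qmat, Matrix.trace, Fin.sum_univ_three]
    · show Matrix.trace (Qmat a b c k₂) = 0
      simp [Qmat, Matrix.trace, Fin.sum_univ_three]
  · intro X hX
    have htr : Matrix.trace X = 0 := hX
    have h22 : X 2 2 = -X 0 0 - X 1 1 := by
      simp [Matrix.trace, Fin.sum_univ_three] at htr
      linarith
    have heq : X = X 0 0 • (Emat 0 0 - Emat 2 2) + X 1 1 • (Emat 1 1 - Emat 2 2)
        + X 0 1 • Emat 0 1 + X 0 2 • Emat 0 2 + X 1 0 • Emat 1 0 + X 1 2 • Emat 1 2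
        + X 2 0 • Emat 2 0 + X 2 1 • Emat 2 1 := by
      ext i j
      fin_cases i <;> fin_cases j <;>
        simp [Matrix.single, h22] <;> ring
    rw [heq]
    exact add_mem (add_mem (add_mem (add_mem (add_mem (add_mem (add_mem
      (L.smul_mem _ hD1) (L.smul_mem _ hD2)) (L.smul_mem _ hE01)) (L.smul_mem _ hE02))
      (L.smul_mem _ hE10)) (L.smul_mem _ hE12)) (L.smul_mem _ hE20)) (L.smul_mem _ hE21)
end
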